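/- Assume that for every skew-symmetrizable initial matrix the sign-coherence property holds (every C-matrix of every pattern is column sign-coherent). Then for every vertex t and every index i, the G-cone σ(G_t) ⊆ ℝⁿ intersects the coordinate hyperplane {v ∈ ℝⁿ : v_i = 0} only in its topological boundary; that is, σ(G_t) ∩ {v : v_i = 0} is contained in the boundary of σ(G_t). -/

import Mathlib

open Matrix

namespace ClusterPattern

variable {ι : Type*} [Fintype ι] [DecidableEq ι]

/-- Entrywise positive part `[A]₊`. -/
def posPart (A : Matrix ι ι ℤ) : Matrix ι ι ℤ := Matrix.of fun i j => max (A i j) 0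

/-- `A^{•k}`: all columns other than the `k`-th set to `0`. -/
def colSel (k : ι) (A : Matrix ι ι ℤ) : Matrix ι ι ℤ :=
  Matrix.of fun i j => if j = k then A i j else 0

/-- `A^{k•}`: all rows other than the `k`-th set to `0`. -/
def rowSel (k : ι) (A : Matrix ι ι ℤ) : Matrix ι ι ℤ :=
  Matrix.of fun i j => if i = k then A i j else 0

/-- `J_k`: identity with `k`-th diagonal entry replaced by `-1`. -/
def Jmat (k : ι) : Matrix ι ι ℤ := Matrix.diagonal fun i => if i = k then -1 else 1

/-- A skew-symmetrizable integer matrix. -/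
def IsSkewSymmetrizable (B : Matrix ι ι ℤ) : Prop :=
  ∃ D : ι → ℚ, (∀ i, 0 < D i) ∧ ∀ i j, D i * (B i j : ℚ) = -(D j * (B j i : ℚ))

/-- Matrix mutation `μ_k`. -/
def mutate (k : ι) (B : Matrix ι ι ℤ) : Matrix ι ι ℤ :=
  Matrix.of fun i j => if i = k ∨ j = k then -B i j
    else B i j + B i k * max (B k j) 0 + max (-B i k) 0 * B k j

/-- The exchange matrix `B_t` at the vertex reached from `B0` along the path `w`. -/
def Bmat (B0 : Matrix ι ι ℤ) (w : List ι) : Matrix ι ι ℤ :=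
  w.foldl (fun B k => mutate k B) B0

/-- One mutation step of a `C`-matrix. -/
def Cstep (B C : Matrix ι ι ℤ) (k : ι) : Matrix ι ι ℤ :=
  C * Jmat k + C * rowSel k (posPart B) + colSel k (posPart (-C)) * B

/-- One mutation step of a `G`-matrix. -/
def Gstep (B0 B C G : Matrix ι ι ℤ) (k : ι) : Matrix ι ι ℤ :=
  G * Jmat k + G * colSel k (posPart (-B)) - B0 * colSel k (posPart (-C))

/-- The `C`-matrix `C_t` at the vertex reached from the initial matrix `B0` along `w`. -/
def Cmat (B0 : Matrix ι ι ℤ) (w : List ι) : Matrix ι ι ℤ :=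
  (w.foldl (fun p k => (mutate k p.1, Cstep p.1 p.2 k))
    ((B0, 1) : Matrix ι ι ℤ × Matrix ι ι ℤ)).2

/-- The `G`-matrix `G_t` at the vertex reached from the initial matrix `B0` along `w`. -/
def Gmat (B0 : Matrix ι ι ℤ) (w : List ι) : Matrix ι ι ℤ :=
  (w.foldl (fun p k => (mutate k p.1, Cstep p.1 p.2.1 k, Gstep B0 p.1 p.2.1 p.2.2 k))
    ((B0, 1, 1) : Matrix ι ι ℤ × Matrix ι ι ℤ × Matrix ι ι ℤ)).2.2

/-- A nonzero integer vector with all entries nonnegative. -/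
def IsPositiveVec (v : ι → ℤ) : Prop := v ≠ 0 ∧ ∀ i, 0 ≤ v i

/-- A nonzero integer vector with all entries nonpositive. -/
def IsNegativeVec (v : ι → ℤ) : Prop := v ≠ 0 ∧ ∀ i, v i ≤ 0

/-- Every column is a positive or a negative vector. -/
def ColSignCoherent (M : Matrix ι ι ℤ) : Prop :=
  ∀ j, IsPositiveVec (fun i => M i j) ∨ IsNegativeVec (fun i => M i j)

/-- Every row is a positive or a negative vector. -/
def RowSignCoherent (M : Matrix ι ι ℤ) : Prop :=
  ∀ i, IsPositiveVec (fun j => M i j) ∨ IsNegativeVec (fun j => M i j)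

/-- The `G`-cone: nonnegative real combinations of the columns of `G_t`. -/
def Gcone (B0 : Matrix ι ι ℤ) (w : List ι) : Set (ι → ℝ) :=
  {v | ∃ a : ι → ℝ, (∀ j, 0 ≤ a j) ∧ v = fun i => ∑ j, a j * (Gmat B0 w i j : ℝ)}

/-- The subcone of the `G`-cone spanned by the `g`-vectors with indices in `S`. -/
def Gsubcone (B0 : Matrix ι ι ℤ) (w : List ι) (S : Set ι) : Set (ι → ℝ) :=
  {v | ∃ a : ι → ℝ, (∀ j, 0 ≤ a j) ∧ (∀ j ∉ S, a j = 0) ∧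
    v = fun i => ∑ j, a j * (Gmat B0 w i j : ℝ)}

/-- The face `σ_i(G_t)` spanned by the `g`-vectors `g_{j;t}`, `j ≠ i`. -/
def GconeFace (B0 : Matrix ι ι ℤ) (w : List ι) (i : ι) : Set (ι → ℝ) :=
  {v | ∃ a : ι → ℝ, (∀ j, 0 ≤ a j) ∧ a i = 0 ∧
    v = fun l => ∑ j, a j * (Gmat B0 w l j : ℝ)}

set_option linter.unusedSectionVars false
set_option maxHeartbeats 2000000

/-! ### Helper lemmas on `max` -/

lemma pp_neg (x : ℤ) : max (-x) 0 = max x 0 - x := by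
  rcases le_total x 0 with h | h
  · rw [max_eq_left (neg_nonneg.2 h), max_eq_right h]; ring
  · rw [max_eq_right (neg_nonpos.2 h), max_eq_left h]; ring

lemma pp_of_nonneg {x : ℤ} (h : 0 ≤ x) : max x 0 = x := max_eq_left h
lemma pp_of_nonpos {x : ℤ} (h : x ≤ 0) : max x 0 = 0 := max_eq_right h

lemma coh_identity {ε x : ℤ} (y : ℤ) (hε : ε = 1 ∨ ε = -1) (h : 0 ≤ ε * x) :
    x * max y 0 + max (-x) 0 * y = x * max (ε * y) 0 := by
  rcases hε with rfl | rfl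
  · rw [one_mul] at h ⊢
    rw [pp_of_nonpos (by linarith : -x ≤ 0)]; ring
  · rw [neg_one_mul] at h ⊢
    have hx : x ≤ 0 := by linarith
    rw [pp_of_nonneg (by linarith : (0:ℤ) ≤ -x), pp_neg y]; ring

/-! ### `Fm` and `Hm` -/

/-- `J_k + [eB]₊^{k•}`. -/
def Fm (B : Matrix ι ι ℤ) (k : ι) (e : ℤ) : Matrix ι ι ℤ :=
  Matrix.of fun i j =>
    (if i = j then (if i = k then -1 else 1) else 0) + (if i = k then max (e * B k j) 0 else 0)

/-- `J_k + [-eB]₊^{•k}`. -/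
def Hm (B : Matrix ι ι ℤ) (k : ι) (e : ℤ) : Matrix ι ι ℤ :=
  Matrix.of fun i j =>
    (if i = j then (if i = k then -1 else 1) else 0) + (if j = k then max (-(e * B i k)) 0 else 0)

lemma Fm_apply (B : Matrix ι ι ℤ) (k : ι) (e : ℤ) (i j : ι) :
    Fm B k e i j = (if i = j then (if i = k then -1 else 1) else 0) +
      (if i = k then max (e * B k j) 0 else 0) := rfl

lemma Hm_apply (B : Matrix ι ι ℤ) (k : ι) (e : ℤ) (i j : ι) :
    Hm B k e i j = (if i = j then (if i = k then -1 else 1) else 0) +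
      (if j = k then max (-(e * B i k)) 0 else 0) := rfl

lemma mul_Fm (B : Matrix ι ι ℤ) (k : ι) (e : ℤ) (M : Matrix ι ι ℤ) (i l : ι) :
    (M * Fm B k e) i l = (if l = k then -(M i l) else M i l) + M i k * max (e * B k l) 0 := by
  rw [Matrix.mul_apply]
  have : ∀ a : ι, M i a * Fm B k e a l =
      (if a = l then M i a * (if a = k then -1 else 1) else 0) +
      (if a = k then M i a * max (e * B k l) 0 else 0) := by
    intro a
    rw [Fm_apply, mul_add]
    congr 1 <;> split_ifs <;> ring
  simp only [this]
  rw [Finset.sum_add_distrib,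
    Finset.sum_eq_single l (fun b _ hb => by rw [if_neg hb]) (fun h => absurd (Finset.mem_univ l) h),
    Finset.sum_eq_single k (fun b _ hb => by rw [if_neg hb]) (fun h => absurd (Finset.mem_univ k) h),
    if_pos rfl, if_pos rfl]
  split_ifs with h
  · subst h; ring
  · ring

lemma Fm_mul (B : Matrix ι ι ℤ) (k : ι) (e : ℤ) (M : Matrix ι ι ℤ) (i l : ι) :
    (Fm B k e * M) i l =
      if i = k then -(M i l) + ∑ a, max (e * B k a) 0 * M a l else M i l := by
  rw [Matrix.mul_apply]
  by_cases hik : i = k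
  · rw [if_pos hik]
    have h1 : ∀ a : ι, Fm B k e i a * M a l =
        (if i = a then -(M a l) else 0) + max (e * B k a) 0 * M a l := by
      intro a
      rw [Fm_apply, if_pos hik, if_pos hik, add_mul]
      congr 1
      split_ifs <;> ring
    simp only [h1]
    rw [Finset.sum_add_distrib,
      Finset.sum_eq_single i (fun b _ hb => by rw [if_neg (fun h => hb (h.symm))])
        (fun h => absurd (Finset.mem_univ i) h), if_pos rfl]
  · rw [if_neg hik]
    have h1 : ∀ a : ι, Fm B k e i a * M a l = if i = a then M a l else 0 := by
      intro a
      rw [Fm_apply, if_neg hik, if_neg hik, add_zero]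
      split_ifs <;> ring
    simp only [h1]
    rw [Finset.sum_eq_single i (fun b _ hb => by rw [if_neg (fun h => hb (h.symm))])
      (fun h => absurd (Finset.mem_univ i) h), if_pos rfl]

lemma mul_Hm (B : Matrix ι ι ℤ) (k : ι) (e : ℤ) (M : Matrix ι ι ℤ) (i l : ι) :
    (M * Hm B k e) i l =
      if l = k then -(M i l) + ∑ a, M i a * max (-(e * B a k)) 0 else M i l := by
  rw [Matrix.mul_apply]
  by_cases hlk : l = k
  · rw [if_pos hlk]
    subst hlk
    have h1 : ∀ a : ι, M i a * Hm B l e a l =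
        (if a = l then -(M i a) else 0) + M i a * max (-(e * B a l)) 0 := by
      intro a
      rw [Hm_apply, if_pos rfl, mul_add]
      congr 1
      split_ifs <;> ring
    simp only [h1]
    rw [Finset.sum_add_distrib,
      Finset.sum_eq_single l (fun b _ hb => by rw [if_neg hb])
        (fun h => absurd (Finset.mem_univ l) h), if_pos rfl]
  · rw [if_neg hlk]
    have h1 : ∀ a : ι, M i a * Hm B k e a l =
        if a = l then M i a * (if a = k then -1 else 1) else 0 := by
      intro a
      rw [Hm_apply, if_neg hlk, add_zero, mul_ite, mul_zero]
    simp only [h1]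
    rw [Finset.sum_eq_single l (fun b _ hb => by rw [if_neg hb])
      (fun h => absurd (Finset.mem_univ l) h), if_pos rfl, if_neg hlk, mul_one]

lemma Hm_mul (B : Matrix ι ι ℤ) (k : ι) (e : ℤ) (M : Matrix ι ι ℤ) (i l : ι) :
    (Hm B k e * M) i l =
      (if i = k then -(M i l) else M i l) + max (-(e * B i k)) 0 * M k l := by
  rw [Matrix.mul_apply]
  have h1 : ∀ a : ι, Hm B k e i a * M a l =
      (if i = a then (if i = k then -(M a l) else M a l) else 0) +
      (if a = k then max (-(e * B i k)) 0 * M a l else 0) := by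
    intro a
    rw [Hm_apply, add_mul]
    congr 1
    · split_ifs <;> ring
    · split_ifs <;> ring
  simp only [h1]
  rw [Finset.sum_add_distrib,
    Finset.sum_eq_single i (fun b _ hb => by rw [if_neg (fun h => hb (h.symm))])
      (fun h => absurd (Finset.mem_univ i) h),
    Finset.sum_eq_single k (fun b _ hb => by rw [if_neg hb])
      (fun h => absurd (Finset.mem_univ k) h),
    if_pos rfl, if_pos rfl]




/-! ### Mutation lemmas -/

lemma mutate_apply (k : ι) (B : Matrix ι ι ℤ) (i j : ι) :
    mutate k B i j = if i = k ∨ j = k then -B i j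
      else B i j + B i k * max (B k j) 0 + max (-B i k) 0 * B k j := rfl

lemma mutate_row_k (k : ι) (B : Matrix ι ι ℤ) (j : ι) : mutate k B k j = -B k j := by
  rw [mutate_apply, if_pos (Or.inl rfl)]

lemma mutate_col_k (k : ι) (B : Matrix ι ι ℤ) (i : ι) : mutate k B i k = -B i k := by
  rw [mutate_apply, if_pos (Or.inr rfl)]

lemma sub_pp (x : ℤ) : max x 0 - max (-x) 0 = x := by rw [pp_neg]; ring

lemma mutate_mutate (k : ι) (B : Matrix ι ι ℤ) : mutate k (mutate k B) = B := by
  ext i j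
  by_cases h : i = k ∨ j = k
  · rw [mutate_apply, if_pos h, mutate_apply, if_pos h, neg_neg]
  · rw [mutate_apply, if_neg h, mutate_apply, if_neg h, mutate_col_k, mutate_row_k]
    rw [neg_neg, pp_neg (B k j), pp_neg (B i k)]
    ring

lemma symm_identity (x y : ℤ) : x * max y 0 + max (-x) 0 * y = y * max x 0 + max (-y) 0 * x := by
  rcases le_total x 0 with hx | hx <;> rcases le_total y 0 with hy | hy <;>
    rw [pp_neg, pp_neg] <;>
    [skip; skip; skip; skip] <;>
    first
      | (rw [pp_of_nonpos hx, pp_of_nonpos hy]; ring)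
      | (rw [pp_of_nonpos hx, pp_of_nonneg hy]; ring)
      | (rw [pp_of_nonneg hx, pp_of_nonpos hy]; ring)
      | (rw [pp_of_nonneg hx, pp_of_nonneg hy]; ring)

lemma mutate_transpose (k : ι) (B : Matrix ι ι ℤ) :
    mutate k Bᵀ = (mutate k B)ᵀ := by
  ext i j
  rw [Matrix.transpose_apply, mutate_apply, mutate_apply]
  by_cases h : i = k ∨ j = k
  · rw [if_pos h, if_pos (Or.symm h), Matrix.transpose_apply]
  · rw [if_neg h, if_neg (fun hh => h (Or.symm hh))]
    simp only [Matrix.transpose_apply]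
    have := symm_identity (B k i) (B j k)
    linarith [symm_identity (B j k) (B k i)]

/-! ### Skew-symmetrizability -/

def SkewD (D : ι → ℚ) (B : Matrix ι ι ℤ) : Prop :=
  ∀ i j, D i * (B i j : ℚ) = -(D j * (B j i : ℚ))

lemma diag_zero {D : ι → ℚ} {B : Matrix ι ι ℤ} (hD : ∀ i, 0 < D i) (h : SkewD D B) (i : ι) :
    B i i = 0 := by
  have h1 := h i i
  have h2 : (B i i : ℚ) = 0 := by nlinarith [hD i]
  exact_mod_cast h2

lemma pp_of_nonneg' {x : ℚ} (h : 0 ≤ x) : max x 0 = x := max_eq_left h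
lemma pp_of_nonpos' {x : ℚ} (h : x ≤ 0) : max x 0 = 0 := max_eq_right h

lemma qpp_scale {d : ℚ} (hd : 0 < d) (x : ℚ) : d * max x 0 = max (d * x) 0 := by
  rcases le_total x 0 with h | h
  · rw [pp_of_nonpos' h, pp_of_nonpos' (mul_nonpos_of_nonneg_of_nonpos hd.le h), mul_zero]
  · rw [pp_of_nonneg' h, pp_of_nonneg' (mul_nonneg hd.le h)]

lemma qmax_abs (x : ℚ) : max x 0 = (x + |x|) / 2 := by
  rcases abs_cases x with ⟨h1, h2⟩ | ⟨h1, h2⟩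
  · rw [pp_of_nonneg' h2, h1]; ring
  · rw [pp_of_nonpos' h2.le, h1]; ring

lemma absD_rel {D : ι → ℚ} (hD : ∀ i, 0 < D i) {B : Matrix ι ι ℤ} (h : SkewD D B) (i j : ι) :
    D i * |(B i j : ℚ)| = D j * |(B j i : ℚ)| := by
  have h1 : |D i * (B i j : ℚ)| = |D j * (B j i : ℚ)| := by rw [h i j, abs_neg]
  rwa [abs_mul, abs_mul, abs_of_pos (hD i), abs_of_pos (hD j)] at h1

lemma skewD_mutate {D : ι → ℚ} {B : Matrix ι ι ℤ} (hD : ∀ i, 0 < D i) (h : SkewD D B)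
    (k : ι) : SkewD D (mutate k B) := by
  intro i j
  by_cases hc : i = k ∨ j = k
  · rw [mutate_apply, mutate_apply, if_pos hc, if_pos (Or.symm hc)]
    push_cast
    have := h i j
    linarith
  · rw [mutate_apply, mutate_apply, if_neg hc, if_neg (fun hh => hc (Or.symm hh))]
    push_cast
    have hij := h i j
    have r1 := h i k
    have r2 := h j k
    have r3 := absD_rel hD h i k
    have r4 := absD_rel hD h j k
    rw [qmax_abs ((B k j : ℚ)), qmax_abs ((B k i : ℚ)), qmax_abs (-(B i k : ℚ)),
      qmax_abs (-(B j k : ℚ)), abs_neg, abs_neg]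
    linear_combination hij + (|(B k j : ℚ)|/2) * r1 + ((B k j : ℚ)/2) * r3 +
      (|(B k i : ℚ)|/2) * r2 + ((B k i : ℚ)/2) * r4

lemma skewD_transpose {D : ι → ℚ} {B : Matrix ι ι ℤ} (hD : ∀ i, 0 < D i) (h : SkewD D B) :
    SkewD (fun i => (D i)⁻¹) Bᵀ := by
  intro i j
  simp only [Matrix.transpose_apply]
  have h1 := h j i
  have hi := (hD i).ne'
  have hj := (hD j).ne'
  field_simp
  linarith

lemma skewD_Bmat {D : ι → ℚ} (hD : ∀ i, 0 < D i) :
    ∀ (w : List ι) (B : Matrix ι ι ℤ), SkewD D B → SkewD D (Bmat B w) := by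
  intro w
  induction w with
  | nil => intro B h; exact h
  | cons k u ih =>
    intro B h
    exact ih (mutate k B) (skewD_mutate hD h k)

lemma isSkew_mutate {B : Matrix ι ι ℤ} (h : IsSkewSymmetrizable B) (k : ι) :
    IsSkewSymmetrizable (mutate k B) := by
  obtain ⟨D, hD, hs⟩ := h
  exact ⟨D, hD, skewD_mutate hD hs k⟩

lemma isSkew_Bmat {B : Matrix ι ι ℤ} (h : IsSkewSymmetrizable B) (w : List ι) :
    IsSkewSymmetrizable (Bmat B w) := by
  obtain ⟨D, hD, hs⟩ := h
  exact ⟨D, hD, skewD_Bmat hD w B hs⟩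

lemma isSkew_transpose {B : Matrix ι ι ℤ} (h : IsSkewSymmetrizable B) :
    IsSkewSymmetrizable Bᵀ := by
  obtain ⟨D, hD, hs⟩ := h
  exact ⟨fun i => (D i)⁻¹, fun i => inv_pos.2 (hD i), skewD_transpose hD hs⟩



/-! ### Fm/Hm structural lemmas -/

lemma Fm_transpose (B : Matrix ι ι ℤ) (k : ι) (e : ℤ) :
    (Fm B k e)ᵀ = Hm Bᵀ k (-e) := by
  ext i j
  rw [Matrix.transpose_apply, Fm_apply, Hm_apply, Matrix.transpose_apply]
  have : -(-e * B k i) = e * B k i := by ring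
  rw [this]
  congr 1
  by_cases hij : i = j
  · subst hij; rfl
  · rw [if_neg hij, if_neg (fun h => hij h.symm)]

lemma Hm_transpose (B : Matrix ι ι ℤ) (k : ι) (e : ℤ) :
    (Hm B k e)ᵀ = Fm Bᵀ k (-e) := by
  have := Fm_transpose Bᵀ k (-e)
  rw [Matrix.transpose_transpose, neg_neg] at this
  rw [← this, Matrix.transpose_transpose]

lemma Fm_mutate (B : Matrix ι ι ℤ) (k : ι) (e : ℤ) :
    Fm (mutate k B) k e = Fm B k (-e) := by
  ext i j
  rw [Fm_apply, Fm_apply, mutate_row_k]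
  have : e * -B k j = -e * B k j := by ring
  rw [this]

lemma Hm_mutate (B : Matrix ι ι ℤ) (k : ι) (e : ℤ) :
    Hm (mutate k B) k e = Hm B k (-e) := by
  ext i j
  rw [Hm_apply, Hm_apply, mutate_col_k]
  have : -(e * -B i k) = -(-e * B i k) := by ring
  rw [this]

lemma Fm_self_mul_self {B : Matrix ι ι ℤ} {k : ι} (hkk : B k k = 0) (e : ℤ) :
    Fm B k e * Fm B k e = 1 := by
  ext i l
  rw [Fm_mul]
  by_cases hik : i = k
  · rw [if_pos hik]
    have hsum : ∑ a, max (e * B k a) 0 * Fm B k e a l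
        = max (e * B k l) 0 * (if l = k then -1 else 1) + max (e * B k k) 0 * max (e * B k l) 0 := by
      have h1 : ∀ a, max (e * B k a) 0 * Fm B k e a l =
          (if a = l then max (e * B k a) 0 * (if a = k then -1 else 1) else 0) +
          (if a = k then max (e * B k a) 0 * max (e * B k l) 0 else 0) := by
        intro a; rw [Fm_apply, mul_add]; congr 1 <;> split_ifs <;> ring
      rw [Finset.sum_congr rfl fun a _ => h1 a, Finset.sum_add_distrib,
        Finset.sum_eq_single l (fun b _ hb => by rw [if_neg hb])
          (fun h => absurd (Finset.mem_univ l) h),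
        Finset.sum_eq_single k (fun b _ hb => by rw [if_neg hb])
          (fun h => absurd (Finset.mem_univ k) h),
        if_pos rfl, if_pos rfl]
    rw [hsum, hkk, mul_zero]
    have hz0 : (max (0:ℤ) 0) = 0 := max_self 0
    rw [hz0, zero_mul, add_zero, Fm_apply, if_pos hik, if_pos hik]
    by_cases hlk : l = k
    · have hil : i = l := by rw [hik, hlk]
      have hz : max (e * B k l) 0 = 0 := by rw [hlk, hkk, mul_zero]; rfl
      have ho : (1 : Matrix ι ι ℤ) i l = 1 := by rw [hil]; exact Matrix.one_apply_eq _
      rw [if_pos hil, if_pos hlk, hz, ho]; ring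
    · have hil : ¬ i = l := fun h => hlk (h ▸ hik)
      have ho : (1 : Matrix ι ι ℤ) i l = 0 := Matrix.one_apply_ne hil
      rw [if_neg hil, if_neg hlk, ho]; ring
  · rw [if_neg hik, Fm_apply, if_neg hik, if_neg hik, add_zero, Matrix.one_apply]

lemma Hm_self_mul_self {B : Matrix ι ι ℤ} {k : ι} (hkk : B k k = 0) (e : ℤ) :
    Hm B k e * Hm B k e = 1 := by
  have h1 : Bᵀ k k = 0 := hkk
  have h2 := Fm_self_mul_self (B := Bᵀ) h1 (-e)
  have h4 : (Fm Bᵀ k (-e))ᵀ = Hm B k e := by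
    rw [Fm_transpose, Matrix.transpose_transpose, neg_neg]
  calc Hm B k e * Hm B k e = (Fm Bᵀ k (-e))ᵀ * (Fm Bᵀ k (-e))ᵀ := by rw [h4]
    _ = (Fm Bᵀ k (-e) * Fm Bᵀ k (-e))ᵀ := (Matrix.transpose_mul _ _).symm
    _ = 1 := by rw [h2, Matrix.transpose_one]

/-! ### Fold lemmas -/

lemma Bmat_nil (B : Matrix ι ι ℤ) : Bmat B [] = B := rfl
lemma Bmat_cons (B : Matrix ι ι ℤ) (k : ι) (u : List ι) :
    Bmat B (k :: u) = Bmat (mutate k B) u := rfl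
lemma Bmat_append_singleton (B : Matrix ι ι ℤ) (w : List ι) (k : ι) :
    Bmat B (w ++ [k]) = mutate k (Bmat B w) := by
  unfold Bmat
  rw [List.foldl_append]
  rfl

lemma Cfold_fst (w : List ι) :
    ∀ (B C : Matrix ι ι ℤ),
      (w.foldl (fun p k => (mutate k p.1, Cstep p.1 p.2 k)) (B, C)).1 = Bmat B w := by
  induction w with
  | nil => intro B C; rfl
  | cons k u ih => intro B C; exact ih (mutate k B) (Cstep B C k)

lemma Cmat_nil (B : Matrix ι ι ℤ) : Cmat B [] = 1 := rfl

lemma Cmat_append_singleton (B : Matrix ι ι ℤ) (w : List ι) (k : ι) :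
    Cmat B (w ++ [k]) = Cstep (Bmat B w) (Cmat B w) k := by
  unfold Cmat
  rw [List.foldl_append]
  show (Cstep (_, _).1 (_, _).2 k) = _
  rw [Cfold_fst]

lemma Gfold_fst (w : List ι) (B0 : Matrix ι ι ℤ) :
    ∀ (B C G : Matrix ι ι ℤ),
      (w.foldl (fun p k => (mutate k p.1, Cstep p.1 p.2.1 k, Gstep B0 p.1 p.2.1 p.2.2 k))
        (B, C, G)).1 = Bmat B w := by
  induction w with
  | nil => intro B C G; rfl
  | cons k u ih => intro B C G; exact ih (mutate k B) (Cstep B C k) (Gstep B0 B C G k)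

lemma Gfold_snd (w : List ι) (B0 : Matrix ι ι ℤ) :
    ∀ (B C G : Matrix ι ι ℤ),
      (w.foldl (fun p k => (mutate k p.1, Cstep p.1 p.2.1 k, Gstep B0 p.1 p.2.1 p.2.2 k))
        (B, C, G)).2.1 =
      (w.foldl (fun p k => (mutate k p.1, Cstep p.1 p.2 k)) (B, C)).2 := by
  induction w with
  | nil => intro B C G; rfl
  | cons k u ih => intro B C G; exact ih (mutate k B) (Cstep B C k) (Gstep B0 B C G k)

lemma Gmat_nil (B : Matrix ι ι ℤ) : Gmat B [] = 1 := rfl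

lemma Gmat_append_singleton (B : Matrix ι ι ℤ) (w : List ι) (k : ι) :
    Gmat B (w ++ [k]) = Gstep B (Bmat B w) (Cmat B w) (Gmat B w) k := by
  unfold Gmat
  rw [List.foldl_append]
  show Gstep B (_, _, _).1 (_, _, _).2.1 (_, _, _).2.2 k = _
  rw [Gfold_fst, Gfold_snd]
  rfl

lemma Cmat_cons (B : Matrix ι ι ℤ) (k : ι) (u : List ι) :
    Cmat B (k :: u) =
      (u.foldl (fun p j => (mutate j p.1, Cstep p.1 p.2 j)) (mutate k B, Cstep B 1 k)).2 := rfl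

lemma Cmat_singleton (B : Matrix ι ι ℤ) (k : ι) : Cmat B [k] = Cstep B 1 k := rfl
lemma Gmat_singleton (B : Matrix ι ι ℤ) (k : ι) : Gmat B [k] = Gstep B B 1 1 k := rfl

/-! ### Multiplicative form of the steps -/

lemma Cstep_eq {C B : Matrix ι ι ℤ} {k : ι} {ε : ℤ} (hε : ε = 1 ∨ ε = -1)
    (hcoh : ∀ i, 0 ≤ ε * C i k) :
    Cstep B C k = C * Fm B k ε := by
  ext i l
  rw [mul_Fm]
  show (C * Jmat k) i l + (C * rowSel k (posPart B)) i l + (colSel k (posPart (-C)) * B) i l = _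
  have h1 : (C * Jmat k) i l = if l = k then -(C i l) else C i l := by
    unfold Jmat
    rw [Matrix.mul_diagonal]
    split_ifs <;> ring
  have h2 : (C * rowSel k (posPart B)) i l = C i k * max (B k l) 0 := by
    rw [Matrix.mul_apply]
    rw [Finset.sum_eq_single k (fun b _ hb => by
        show C i b * rowSel k (posPart B) b l = 0
        unfold rowSel
        rw [Matrix.of_apply, if_neg hb, mul_zero])
      (fun h => absurd (Finset.mem_univ k) h)]
    show C i k * (if (k:ι) = k then posPart B k l else 0) = _
    rw [if_pos rfl]
    rfl
  have h3 : (colSel k (posPart (-C)) * B) i l = max (-(C i k)) 0 * B k l := by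
    rw [Matrix.mul_apply]
    rw [Finset.sum_eq_single k (fun b _ hb => by
        show colSel k (posPart (-C)) i b * B b l = 0
        unfold colSel
        rw [Matrix.of_apply, if_neg hb, zero_mul])
      (fun h => absurd (Finset.mem_univ k) h)]
    show (if (k:ι) = k then max (-C i k) 0 else 0) * B k l = _
    rw [if_pos rfl]
  rw [h1, h2, h3]
  have key : C i k * max (B k l) 0 + max (-(C i k)) 0 * B k l = C i k * max (ε * B k l) 0 :=
    coh_identity (B k l) hε (hcoh i)
  linarith [key]

lemma Gstep_eq {B0 B C G : Matrix ι ι ℤ} {k : ι} {ε : ℤ} (hε : ε = 1 ∨ ε = -1)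
    (hcoh : ∀ i, 0 ≤ ε * C i k) (hBC : B0 * C = G * B) :
    Gstep B0 B C G k = G * Hm B k ε := by
  ext i l
  rw [mul_Hm]
  show (G * Jmat k) i l + (G * colSel k (posPart (-B))) i l
      - (B0 * colSel k (posPart (-C))) i l = _
  have h1 : (G * Jmat k) i l = if l = k then -(G i l) else G i l := by
    unfold Jmat
    rw [Matrix.mul_diagonal]
    split_ifs <;> ring
  have h2 : ∀ (M N : Matrix ι ι ℤ),
      (M * colSel k N) i l = if l = k then ∑ a, M i a * N a k else 0 := by
    intro M N
    rw [Matrix.mul_apply]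
    by_cases hlk : l = k
    · subst hlk
      rw [if_pos rfl]
      refine Finset.sum_congr rfl fun a _ => ?_
      show M i a * (if (l:ι) = l then N a l else 0) = _
      rw [if_pos rfl]
    · rw [if_neg hlk]
      refine Finset.sum_eq_zero fun a _ => ?_
      show M i a * (if l = k then N a l else 0) = 0
      rw [if_neg hlk, mul_zero]
  rw [h1, h2, h2]
  by_cases hlk : l = k
  · subst hlk
    simp only [eq_self_iff_true, if_true]
    have hpB : ∀ a, posPart (-B) a l = max (-(B a l)) 0 := fun a => rfl
    have hpC : ∀ a, posPart (-C) a l = max (-(C a l)) 0 := fun a => rfl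
    rcases hε with rfl | rfl
    · have hs2 : ∑ a, B0 i a * posPart (-C) a l = 0 := Finset.sum_eq_zero fun a _ => by
        rw [hpC, pp_of_nonpos (by have := hcoh a; linarith), mul_zero]
      have hs1 : ∑ a, G i a * posPart (-B) a l = ∑ a, G i a * max (-(1 * B a l)) 0 :=
        Finset.sum_congr rfl fun a _ => by rw [hpB, one_mul]
      rw [hs2, hs1]; ring
    · have hs2 : ∑ a, B0 i a * posPart (-C) a l = -∑ a, G i a * B a l := by
        have e1 : ∑ a, B0 i a * posPart (-C) a l = ∑ a, -(B0 i a * C a l) :=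
          Finset.sum_congr rfl fun a _ => by
            rw [hpC, pp_of_nonneg (by have := hcoh a; linarith)]; ring
        rw [e1, Finset.sum_neg_distrib]
        have e2 : ∑ a, B0 i a * C a l = (B0 * C) i l := (Matrix.mul_apply).symm
        rw [e2, hBC, Matrix.mul_apply]
      have hs1 : ∑ a, G i a * max (-(-1 * B a l)) 0 =
          ∑ a, (G i a * posPart (-B) a l + G i a * B a l) :=
        Finset.sum_congr rfl fun a _ => by
          rw [hpB]
          have e3 : -(-1 * B a l) = B a l := by ring
          rw [e3, pp_neg]; ring
      rw [hs2, hs1, Finset.sum_add_distrib]; ring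
  · rw [if_neg hlk, if_neg hlk, if_neg hlk, add_zero, sub_zero, if_neg hlk]



/-! ### Casts to ℚ -/

def mq (M : Matrix ι ι ℤ) : Matrix ι ι ℚ := M.map (Int.cast)

lemma mq_apply (M : Matrix ι ι ℤ) (i j : ι) : mq M i j = (M i j : ℚ) := rfl

lemma mq_mul (M N : Matrix ι ι ℤ) : mq (M * N) = mq M * mq N := by
  have : (Int.cast : ℤ → ℚ) = ⇑(Int.castRingHom ℚ) := rfl
  unfold mq
  rw [this, Matrix.map_mul]

lemma mq_one : mq (1 : Matrix ι ι ℤ) = 1 := by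
  ext i j
  rw [mq_apply, Matrix.one_apply, Matrix.one_apply]
  split_ifs <;> simp

lemma mq_transpose (M : Matrix ι ι ℤ) : mq Mᵀ = (mq M)ᵀ := rfl

/-! ### The key identity `Fᵀ D H = D` -/

lemma FtDH {D : ι → ℚ} (hD : ∀ i, 0 < D i) {B : Matrix ι ι ℤ} (hs : SkewD D B)
    (k : ι) (e : ℤ) :
    (mq (Fm B k e))ᵀ * Matrix.diagonal D * mq (Hm B k e) = Matrix.diagonal D := by
  rw [Matrix.mul_assoc]
  have hkk : B k k = 0 := diag_zero hD hs k
  ext i j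
  rw [Matrix.mul_apply]
  have hterm : ∀ a, (mq (Fm B k e))ᵀ i a * (Matrix.diagonal D * mq (Hm B k e)) a j =
      (if a = i then (if i = k then (-1:ℚ) else 1) * (D a * (Hm B k e a j : ℚ)) else 0) +
      (if a = k then (max ((e : ℚ) * (B k i : ℚ)) 0) * (D a * (Hm B k e a j : ℚ)) else 0) := by
    intro a
    rw [Matrix.transpose_apply, Matrix.diagonal_mul, mq_apply, mq_apply, Fm_apply]
    push_cast
    rw [add_mul]
    congr 1
    · by_cases h1 : a = i
      · subst h1; rw [if_pos rfl, if_pos rfl]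
      · rw [if_neg h1, if_neg h1, zero_mul]
    · split_ifs <;> ring
  rw [Finset.sum_congr rfl fun a _ => hterm a, Finset.sum_add_distrib,
    Finset.sum_eq_single i (fun b _ hb => by rw [if_neg hb]) (fun h => absurd (Finset.mem_univ i) h),
    Finset.sum_eq_single k (fun b _ hb => by rw [if_neg hb]) (fun h => absurd (Finset.mem_univ k) h),
    if_pos rfl, if_pos rfl]
  rw [Hm_apply, Hm_apply]
  by_cases hjk : j = k
  · subst hjk
    rw [hkk]
    push_cast
    by_cases hij : i = j
    · subst hij
      simp only [eq_self_iff_true, if_true, Matrix.diagonal_apply_eq, mul_zero, neg_zero,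
        max_self]
      rw [hkk]
      push_cast
      simp only [mul_zero, neg_zero, max_self]
      ring
    · have h5 : (if i = j then (-1:ℚ) else 1) = 1 := if_neg hij
      have h6 : (if i = j then (if i = j then (-1:ℚ) else 1) else 0) = 0 := if_neg hij
      have h7 : (if i = j then (1:ℚ) else 0) = 0 := if_neg hij
      simp only [eq_self_iff_true, if_true, h5, h6, h7, Matrix.diagonal_apply_ne _ hij,
        mul_zero, neg_zero, max_self]
      have key : D i * max (-((e:ℚ) * (B i j : ℚ))) 0 = D j * max ((e:ℚ) * (B j i : ℚ)) 0 := by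
        rw [qpp_scale (hD i), qpp_scale (hD j)]
        congr 1
        linear_combination (-(e:ℚ)) * hs i j
      linarith [key]
  · rw [if_neg hjk, if_neg hjk]
    by_cases hkj : k = j
    · exact absurd hkj.symm hjk
    · rw [if_neg hkj]
      by_cases hij : i = j
      · subst hij
        rw [if_pos rfl, Matrix.diagonal_apply_eq]
        push_cast
        split_ifs <;> ring
      · rw [if_neg (fun h : i = j => hij h), Matrix.diagonal_apply_ne _ hij]
        push_cast
        ring


lemma FH_swap_scalar {ε : ℤ} (hε : ε = 1 ∨ ε = -1) (x y : ℤ) :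
    x * max (ε * y) 0 = x * max y 0 + (max (-x) 0 - max (-(ε * x)) 0) * y := by
  rcases hε with rfl | rfl
  · rw [one_mul, one_mul]; ring
  · rw [neg_one_mul, neg_one_mul, neg_neg, pp_neg y]
    have h : max (-x) 0 - max x 0 = -x := by rw [pp_neg]; ring
    rw [h]; ring

/-- `B ⬝ F(B,k,ε) = H(B,k,ε) ⬝ μ_k B`. -/
lemma B_mul_Fm {B : Matrix ι ι ℤ} {k : ι} (hkk : B k k = 0) {ε : ℤ} (hε : ε = 1 ∨ ε = -1) :
    B * Fm B k ε = Hm B k ε * mutate k B := by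
  ext i j
  rw [mul_Fm, Hm_mul]
  by_cases hik : i = k
  · subst hik
    rw [if_pos rfl, mutate_row_k, hkk, neg_neg]
    simp only [zero_mul, mul_zero, neg_zero, max_self, add_zero]
    split_ifs with h
    · rw [h, hkk]; simp
    · simp
  · rw [if_neg hik]
    by_cases hjk : j = k
    · subst hjk
      rw [if_pos rfl, mutate_col_k, mutate_row_k, hkk]
      simp
    · rw [if_neg hjk, mutate_apply, if_neg (by tauto), mutate_row_k]
      rw [FH_swap_scalar hε (B i k) (B k j)]
      ring


/-- Abbreviation for the global sign-coherence hypothesis. -/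
def SC : Prop := ∀ B : Matrix ι ι ℤ, IsSkewSymmetrizable B →
  ∀ w : List ι, ColSignCoherent (Cmat B w)

variable {hsc : True}

lemma exists_eps (hsc : SC (ι := ι)) {B0 : Matrix ι ι ℤ} (hB0 : IsSkewSymmetrizable B0)
    (w : List ι) (k : ι) :
    ∃ ε : ℤ, (ε = 1 ∨ ε = -1) ∧ (∀ i, 0 ≤ ε * Cmat B0 w i k) ∧
      (∃ i, Cmat B0 w i k ≠ 0) := by
  rcases hsc B0 hB0 w k with ⟨hne, h⟩ | ⟨hne, h⟩
  · refine ⟨1, Or.inl rfl, fun i => by simpa using h i, ?_⟩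
    by_contra hz
    push_neg at hz
    exact hne (funext fun i => hz i)
  · refine ⟨-1, Or.inr rfl, fun i => by have := h i; simp only [neg_one_mul]; linarith, ?_⟩
    by_contra hz
    push_neg at hz
    exact hne (funext fun i => hz i)

/-- The four basic invariants of a `(C,G)`-pattern. -/
lemma invariants (hsc : SC (ι := ι)) {B0 : Matrix ι ι ℤ} {D : ι → ℚ}
    (hD : ∀ i, 0 < D i) (hs : SkewD D B0) (w : List ι) :
    B0 * Cmat B0 w = Gmat B0 w * Bmat B0 w
    ∧ (mq (Cmat B0 w))ᵀ * Matrix.diagonal D * mq (Gmat B0 w) = Matrix.diagonal D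
    ∧ (∃ X, Cmat B0 w * X = 1)
    ∧ (∃ Y, Gmat B0 w * Y = 1) := by
  induction w using List.reverseRecOn with
  | nil =>
    refine ⟨by rw [Cmat_nil, Gmat_nil, Bmat_nil, Matrix.mul_one, Matrix.one_mul], ?_,
      ⟨1, Matrix.one_mul 1⟩, ⟨1, Matrix.one_mul 1⟩⟩
    rw [Cmat_nil, Gmat_nil, mq_one, Matrix.transpose_one, Matrix.one_mul, Matrix.mul_one]
  | append_singleton w k ih =>
    obtain ⟨P1, P2, ⟨X, hX⟩, ⟨Y, hY⟩⟩ := ih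
    obtain ⟨ε, hε, hcoh, -⟩ := exists_eps hsc ⟨D, hD, hs⟩ w k
    have hBt : SkewD D (Bmat B0 w) := skewD_Bmat hD w B0 hs
    have hkk : Bmat B0 w k k = 0 := diag_zero hD hBt k
    have hC : Cmat B0 (w ++ [k]) = Cmat B0 w * Fm (Bmat B0 w) k ε := by
      rw [Cmat_append_singleton, Cstep_eq hε hcoh]
    have hG : Gmat B0 (w ++ [k]) = Gmat B0 w * Hm (Bmat B0 w) k ε := by
      rw [Gmat_append_singleton, Gstep_eq hε hcoh P1]
    refine ⟨?_, ?_, ?_, ?_⟩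
    · rw [hC, hG, Bmat_append_singleton, ← Matrix.mul_assoc B0, P1,
        Matrix.mul_assoc, Matrix.mul_assoc, B_mul_Fm hkk hε]
    · rw [hC, hG, mq_mul, mq_mul, Matrix.transpose_mul]
      have hre : (mq (Fm (Bmat B0 w) k ε))ᵀ * (mq (Cmat B0 w))ᵀ * Matrix.diagonal D *
            (mq (Gmat B0 w) * mq (Hm (Bmat B0 w) k ε)) =
          (mq (Fm (Bmat B0 w) k ε))ᵀ *
            ((mq (Cmat B0 w))ᵀ * Matrix.diagonal D * mq (Gmat B0 w)) *
            mq (Hm (Bmat B0 w) k ε) := by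
        simp only [Matrix.mul_assoc]
      rw [hre, P2, FtDH hD hBt k ε]
    · refine ⟨Fm (Bmat B0 w) k ε * X, ?_⟩
      rw [hC, Matrix.mul_assoc, ← Matrix.mul_assoc (Fm (Bmat B0 w) k ε),
        Fm_self_mul_self hkk, Matrix.one_mul, hX]
    · refine ⟨Hm (Bmat B0 w) k ε * Y, ?_⟩
      rw [hG, Matrix.mul_assoc, ← Matrix.mul_assoc (Hm (Bmat B0 w) k ε),
        Hm_self_mul_self hkk, Matrix.one_mul, hY]

/-- Commuted form of the `CᵀDG = D` invariant. -/
lemma P2comm {D : ι → ℚ} (hD : ∀ i, 0 < D i) {C G : Matrix ι ι ℤ}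
    (h : (mq C)ᵀ * Matrix.diagonal D * mq G = Matrix.diagonal D) :
    mq G * Matrix.diagonal (fun i => (D i)⁻¹) * (mq C)ᵀ =
      Matrix.diagonal (fun i => (D i)⁻¹) := by
  set E := Matrix.diagonal (fun i => (D i)⁻¹) with hE
  have hED : E * Matrix.diagonal D = 1 := by
    rw [hE, Matrix.diagonal_mul_diagonal]
    convert Matrix.diagonal_one with i
    exact inv_mul_cancel₀ (hD i).ne'
  have hDE : Matrix.diagonal D * E = 1 := by
    rw [hE, Matrix.diagonal_mul_diagonal]
    convert Matrix.diagonal_one with i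
    exact mul_inv_cancel₀ (hD i).ne'
  have h1 : (E * (mq C)ᵀ * Matrix.diagonal D) * mq G = 1 := by
    have e1 : (E * (mq C)ᵀ * Matrix.diagonal D) * mq G =
        E * ((mq C)ᵀ * Matrix.diagonal D * mq G) := by
      simp only [Matrix.mul_assoc]
    rw [e1, h, hED]
  have h2 : mq G * (E * (mq C)ᵀ * Matrix.diagonal D) = 1 := mul_eq_one_comm.mp h1
  calc mq G * E * (mq C)ᵀ
      = mq G * E * (mq C)ᵀ * (Matrix.diagonal D * E) := by rw [hDE, Matrix.mul_one]
    _ = (mq G * (E * (mq C)ᵀ * Matrix.diagonal D)) * E := by simp only [Matrix.mul_assoc]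
    _ = 1 * E := by rw [h2]
    _ = E := Matrix.one_mul E

lemma P2_entry {D : ι → ℚ} (C G : Matrix ι ι ℤ) (j l : ι) :
    ((mq C)ᵀ * Matrix.diagonal D * mq G) j l = ∑ i, (C i j : ℚ) * (D i * (G i l : ℚ)) := by
  rw [Matrix.mul_assoc, Matrix.mul_apply]
  exact Finset.sum_congr rfl fun a _ => by
    rw [Matrix.transpose_apply, Matrix.diagonal_mul, mq_apply, mq_apply]

lemma P2comm_entry {D : ι → ℚ} (C G : Matrix ι ι ℤ) (i j : ι) :
    (mq G * Matrix.diagonal (fun i => (D i)⁻¹) * (mq C)ᵀ) i j =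
      ∑ l, (G i l : ℚ) * ((D l)⁻¹ * (C j l : ℚ)) := by
  rw [Matrix.mul_assoc, Matrix.mul_apply]
  exact Finset.sum_congr rfl fun a _ => by
    rw [Matrix.diagonal_mul, Matrix.transpose_apply, mq_apply, mq_apply]

lemma diagonal_entry_eq {D : ι → ℚ} (i : ι) : (Matrix.diagonal D) i i = D i :=
  Matrix.diagonal_apply_eq _ _



/-- The wall-crossing (flip) identity. -/
lemma flip_identity {B₁ Bt C G : Matrix ι ι ℤ} {k j : ι} {c : ℤ}
    (hC : ∀ i, C i j = if i = k then c else 0)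
    (hG : ∀ l, G k l = if l = j then c else 0)
    (hBC : B₁ * C = G * Bt)
    (hB1 : B₁ k k = 0) (hBtjj : Bt j j = 0) :
    Fm B₁ k (-c) * C * Fm Bt j (-c) = Fm B₁ k c * C * Fm Bt j c := by
  have hSj : ∀ e : ℤ, ∑ a, max (e * B₁ k a) 0 * C a j = 0 := by
    intro e
    refine Finset.sum_eq_zero fun a _ => ?_
    rw [hC a]
    split_ifs with h
    · subst h; rw [hB1, mul_zero, max_self, zero_mul]
    · rw [mul_zero]
  have hGBt : ∀ l, (G * Bt) k l = c * Bt j l := by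
    intro l
    rw [Matrix.mul_apply]
    rw [Finset.sum_eq_single j (fun b _ hb => by rw [hG b, if_neg hb, zero_mul])
      (fun h => absurd (Finset.mem_univ j) h), hG j, if_pos rfl]
  have hSdiff : ∀ l, (∑ a, max (-c * B₁ k a) 0 * C a l) =
      (∑ a, max (c * B₁ k a) 0 * C a l) - c * (c * Bt j l) := by
    intro l
    have h1 : ∀ a, max (-c * B₁ k a) 0 * C a l =
        max (c * B₁ k a) 0 * C a l + (-(c * (B₁ k a * C a l))) := by
      intro a
      rw [neg_mul, pp_neg (c * B₁ k a)]
      ring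
    rw [Finset.sum_congr rfl fun a _ => h1 a, Finset.sum_add_distrib]
    congr 1
    rw [Finset.sum_neg_distrib, ← Finset.mul_sum]
    have h3 : ∑ a, B₁ k a * C a l = (B₁ * C) k l := (Matrix.mul_apply).symm
    rw [h3, hBC, hGBt l]
  ext i l
  rw [mul_Fm, mul_Fm, Fm_mul, Fm_mul, Fm_mul, Fm_mul]
  by_cases hik : i = k
  · subst hik
    simp only [if_pos rfl]
    rw [hC i, if_pos rfl, hSj, hSj, hSdiff l]
    rw [neg_mul c (Bt j l), pp_neg (c * Bt j l)]
    split_ifs with h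
    · rw [h, hBtjj]
      ring
    · ring
  · simp only [if_neg hik]
    rw [hC i, if_neg hik]
    ring


/-- The duality statement: the dual pattern from `B_tᵀ` along the reversed path
recovers `(B₀ᵀ, G_tᵀ, C_tᵀ)`. -/
def Mstmt (w : List ι) : Prop := ∀ B0 : Matrix ι ι ℤ, IsSkewSymmetrizable B0 →
  Bmat (Bmat B0 w)ᵀ w.reverse = B0ᵀ ∧
  Cmat (Bmat B0 w)ᵀ w.reverse = (Gmat B0 w)ᵀ ∧
  Gmat (Bmat B0 w)ᵀ w.reverse = (Cmat B0 w)ᵀ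

/-- The base-point shift statement. -/
def Sstmt (k : ι) (u : List ι) : Prop := ∀ B0 : Matrix ι ι ℤ, IsSkewSymmetrizable B0 →
  ∃ δ : ℤ, (δ = 1 ∨ δ = -1) ∧
    Cmat B0 (k :: u) = Fm (mutate k B0) k δ * Cmat (mutate k B0) u ∧
    Gmat B0 (k :: u) = Hm (mutate k B0) k δ * Gmat (mutate k B0) u ∧
    (∀ l, δ * Gmat (mutate k B0) u k l ≤ 0)

lemma Mstmt_nil : Mstmt ([] : List ι) := by
  intro B0 _
  refine ⟨rfl, ?_, ?_⟩ <;>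
    simp [Bmat_nil, Cmat_nil, Gmat_nil, List.reverse_nil, Matrix.transpose_one]

lemma one_coh (k : ι) : ∀ i, 0 ≤ (1 : ℤ) * (1 : Matrix ι ι ℤ) i k := by
  intro i
  rw [one_mul, Matrix.one_apply]
  split_ifs <;> norm_num

lemma S_base (k : ι) : Sstmt k ([] : List ι) := by
  intro B0 _
  refine ⟨-1, Or.inr rfl, ?_, ?_, ?_⟩
  · rw [Cmat_singleton, Cstep_eq (Or.inl rfl) (one_coh k), Cmat_nil, Matrix.one_mul,
      Matrix.mul_one, Fm_mutate]
    norm_num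
  · rw [Gmat_singleton, Gstep_eq (Or.inl rfl) (one_coh k)
      (by rw [Matrix.mul_one, Matrix.one_mul]), Gmat_nil, Matrix.one_mul, Matrix.mul_one,
      Hm_mutate]
    norm_num
  · intro l
    rw [Gmat_nil, Matrix.one_apply]
    split_ifs <;> norm_num

lemma neg_sign {δ : ℤ} (hδ : δ = 1 ∨ δ = -1) : -δ = 1 ∨ -δ = -1 := by
  rcases hδ with rfl | rfl
  · exact Or.inr rfl
  · exact Or.inl (by norm_num)

lemma M_step (hsc : SC (ι := ι)) {k : ι} {u : List ι}
    (hS : Sstmt k u) (hMu : Mstmt u) : Mstmt (k :: u) := by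
  intro B0 hB0
  obtain ⟨D, hD, hsD⟩ := hB0
  set B₁ := mutate k B0 with hB₁def
  have hB1 : IsSkewSymmetrizable B₁ := isSkew_mutate ⟨D, hD, hsD⟩ k
  have hsD1 : SkewD D B₁ := skewD_mutate hD hsD k
  obtain ⟨δ, hδ, eqC, eqG, hsign⟩ := hS B0 ⟨D, hD, hsD⟩
  obtain ⟨hMB, hMC, hMG⟩ := hMu B₁ hB1
  have hBmat : Bmat B0 (k :: u) = Bmat B₁ u := rfl
  have hrev : (k :: u).reverse = u.reverse ++ [k] := List.reverse_cons (a := k) (as := u)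
  set Bt := Bmat B₁ u with hBtdef
  set C1 := Cmat B₁ u with hC1def
  set G1 := Gmat B₁ u with hG1def
  have P1 : B₁ * C1 = G1 * Bt := (invariants hsc hD hsD1 u).1
  have hcohdual : ∀ i, 0 ≤ (-δ) * (G1ᵀ) i k := by
    intro i
    rw [Matrix.transpose_apply]
    have := hsign i
    nlinarith [hsign i]
  have hBCdual : Btᵀ * G1ᵀ = C1ᵀ * B₁ᵀ := by
    have h := congrArg Matrix.transpose P1
    rw [Matrix.transpose_mul, Matrix.transpose_mul] at h
    exact h.symm
  refine ⟨?_, ?_, ?_⟩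
  · rw [hBmat, hrev, Bmat_append_singleton, hMB, ← mutate_transpose, mutate_mutate]
  · rw [hBmat, hrev, Cmat_append_singleton, hMB, hMC,
      Cstep_eq (neg_sign hδ) hcohdual, ← Hm_transpose B₁ k δ, ← Matrix.transpose_mul, ← eqG]
  · rw [hBmat, hrev, Gmat_append_singleton, hMB, hMC, hMG,
      Gstep_eq (neg_sign hδ) hcohdual hBCdual, ← Fm_transpose B₁ k δ,
      ← Matrix.transpose_mul, ← eqC]


lemma row_coherent_of_M {u : List ι} (hsc : SC (ι := ι)) (hMu : Mstmt u)
    {B : Matrix ι ι ℤ} (hB : IsSkewSymmetrizable B) (i : ι) :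
    IsPositiveVec (fun l => Gmat B u i l) ∨ IsNegativeVec (fun l => Gmat B u i l) := by
  obtain ⟨-, hMC, -⟩ := hMu B hB
  have hsk : IsSkewSymmetrizable (Bmat B u)ᵀ := isSkew_transpose (isSkew_Bmat hB u)
  have h := hsc _ hsk u.reverse i
  rw [hMC] at h
  exact h

lemma S_step (hsc : SC (ι := ι)) {k j : ι} {u' : List ι}
    (ihS : Sstmt k u') (hMu' : Mstmt u') (hMu : Mstmt (u' ++ [j])) :
    Sstmt k (u' ++ [j]) := by
  intro B0 hB0'
  obtain ⟨D, hD, hsD⟩ := id hB0'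
  set B₁ := mutate k B0 with hB₁def
  have hB1 : IsSkewSymmetrizable B₁ := isSkew_mutate hB0' k
  have hsD1 : SkewD D B₁ := skewD_mutate hD hsD k
  have hB1kk : B₁ k k = 0 := diag_zero hD hsD1 k
  set Bt := Bmat B₁ u' with hBtdef
  have hsBt : SkewD D Bt := skewD_Bmat hD u' B₁ hsD1
  have hBtjj : Bt j j = 0 := diag_zero hD hsBt j
  set C1 := Cmat B₁ u' with hC1def
  set G1 := Gmat B₁ u' with hG1def
  set C0 := Cmat B0 (k :: u') with hC0def
  set G0 := Gmat B0 (k :: u') with hG0def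
  obtain ⟨δ, hδ, eqC, eqG, hsign⟩ := ihS B0 hB0'
  rw [← hB₁def] at eqC eqG hsign
  rw [← hC0def, ← hC1def] at eqC
  rw [← hG0def, ← hG1def] at eqG
  rw [← hG1def] at hsign
  obtain ⟨P1₁, P2₁, hXex, hYex⟩ := invariants hsc hD hsD1 u'
  rw [← hC1def, ← hG1def, ← hBtdef] at P1₁
  rw [← hC1def, ← hG1def] at P2₁
  obtain ⟨P1₀, -, -, -⟩ := invariants hsc hD hsD (k :: u')
  have hBmat0 : Bmat B0 (k :: u') = Bt := rfl
  rw [hBmat0, ← hC0def, ← hG0def] at P1₀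
  have hCons : (k :: (u' ++ [j])) = (k :: u') ++ [j] := rfl
  have hC0new : Cmat B0 (k :: (u' ++ [j])) = Cstep Bt C0 j := by
    rw [hCons, Cmat_append_singleton, hBmat0, hC0def]
  have hG0new : Gmat B0 (k :: (u' ++ [j])) = Gstep B0 Bt C0 G0 j := by
    rw [hCons, Gmat_append_singleton, hBmat0, hC0def, hG0def]
  have hC1new : Cmat B₁ (u' ++ [j]) = Cstep Bt C1 j := by
    rw [Cmat_append_singleton, hBtdef, hC1def]
  have hG1new : Gmat B₁ (u' ++ [j]) = Gstep B₁ Bt C1 G1 j := by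
    rw [Gmat_append_singleton, hBtdef, hC1def, hG1def]
  have hrowG1 := row_coherent_of_M hsc hMu' hB1 k
  have hrowG1' := row_coherent_of_M hsc hMu hB1 k
  obtain ⟨ε1, hε1, hcoh1, hne1⟩ := exists_eps hsc hB1 u' j
  rw [← hC1def] at hne1
  replace hcoh1 : ∀ i, 0 ≤ ε1 * C1 i j := hcoh1
  by_cases hcase : ∀ l, l ≠ k → C1 l j = 0
  · -- FLIP case
    set c := C1 k j with hcdef
    have hC1col : ∀ i, C1 i j = if i = k then c else 0 := by
      intro i
      split_ifs with h
      · rw [h]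
      · exact hcase i h
    have hcne : c ≠ 0 := by
      obtain ⟨i1, hi1⟩ := hne1
      by_cases h : i1 = k
      · rw [h] at hi1; exact hi1
      · exact absurd (hcase i1 h) hi1
    have hrow : ∀ l, (c : ℚ) * (D k * (G1 k l : ℚ)) = if j = l then D j else 0 := by
      intro l
      have h1 : ((mq C1)ᵀ * Matrix.diagonal D * mq G1) j l = Matrix.diagonal D j l := by
        rw [P2₁]
      rw [P2_entry, Finset.sum_eq_single k
        (fun b _ hb => by rw [hcase b hb]; push_cast; ring)
        (fun h => absurd (Finset.mem_univ k) h), Matrix.diagonal_apply] at h1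
      exact h1
    have hG1offj : ∀ l, l ≠ j → G1 k l = 0 := by
      intro l hl
      have h1 := hrow l
      rw [if_neg (fun h => hl h.symm)] at h1
      have hcq : (c : ℚ) ≠ 0 := Int.cast_ne_zero.mpr hcne
      have h2 : (G1 k l : ℚ) = 0 := by
        rcases mul_eq_zero.mp h1 with h | h
        · exact absurd h hcq
        · rcases mul_eq_zero.mp h with h | h
          · exact absurd h (hD k).ne'
          · exact h
      exact_mod_cast h2
    set m := G1 k j with hmdef
    have hcm : (c : ℚ) * (D k * (m : ℚ)) = D j := by
      have := hrow j
      rwa [if_pos rfl] at this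
    obtain ⟨X, hX⟩ := hXex
    rw [← hC1def] at hX
    have hXC : X * C1 = 1 := mul_eq_one_comm.mp hX
    have hc1 : c = 1 ∨ c = -1 := by
      have h2 : (X * C1) j j = 1 := by rw [hXC]; exact Matrix.one_apply_eq j
      rw [Matrix.mul_apply, Finset.sum_eq_single k
        (fun b _ hb => by rw [hcase b hb, mul_zero])
        (fun h => absurd (Finset.mem_univ k) h)] at h2
      exact Int.isUnit_iff.mp (IsUnit.of_mul_eq_one (X j k) (by rw [mul_comm]; exact h2))
    obtain ⟨Y, hY⟩ := hYex
    rw [← hG1def] at hY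
    have hm1 : m = 1 ∨ m = -1 := by
      have h2 : (G1 * Y) k k = 1 := by rw [hY]; exact Matrix.one_apply_eq k
      rw [Matrix.mul_apply, Finset.sum_eq_single j
        (fun b _ hb => by rw [hG1offj b hb, zero_mul])
        (fun h => absurd (Finset.mem_univ j) h)] at h2
      exact Int.isUnit_iff.mp (IsUnit.of_mul_eq_one (Y j k) h2)
    have hmc : m = c := by
      rcases hc1 with hc | hc <;> rcases hm1 with hm | hm <;> rw [hc, hm] at hcm ⊢ <;>
        first
          | rfl
          | (exfalso; push_cast at hcm; nlinarith [hD j, hD k])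
    have hδc : δ = -c := by
      have h1 : δ * m ≤ 0 := by rw [hmdef]; exact hsign j
      rw [hmc] at h1
      rcases hδ with rfl | rfl <;> rcases hc1 with hc | hc <;> rw [hc] at h1 ⊢ <;> omega
    have hG1row : ∀ l, G1 k l = if l = j then c else 0 := by
      intro l
      split_ifs with h
      · rw [h, ← hmdef, hmc]
      · exact hG1offj l h
    have hC0col : ∀ i, C0 i j = if i = k then -c else 0 := by
      intro i
      rw [eqC, Fm_mul]
      by_cases h : i = k
      · rw [if_pos h, if_pos h]
        have hsum0 : ∑ a, max (δ * B₁ k a) 0 * C1 a j = 0 := by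
          refine Finset.sum_eq_zero fun a _ => ?_
          rw [hC1col a]
          split_ifs with h2
          · rw [h2, hB1kk, mul_zero, max_self, zero_mul]
          · rw [mul_zero]
        rw [hsum0, add_zero, h, ← hcdef]
      · rw [if_neg h, if_neg h, hcase i h]
    have hεc : (-c = 1 ∨ -c = -1) := by
      rcases hc1 with hc | hc <;> rw [hc] <;> norm_num
    have hcohC0 : ∀ i, 0 ≤ (-c) * C0 i j := by
      intro i
      rw [hC0col i]
      split_ifs
      · nlinarith [mul_self_nonneg c]
      · simp
    have hcohC1 : ∀ i, 0 ≤ c * C1 i j := by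
      intro i
      rw [hC1col i]
      split_ifs
      · exact mul_self_nonneg c
      · simp
    have hC0' : Cmat B0 (k :: (u' ++ [j])) = C0 * Fm Bt j (-c) := by
      rw [hC0new, Cstep_eq hεc hcohC0]
    have hC1' : Cmat B₁ (u' ++ [j]) = C1 * Fm Bt j c := by
      rw [hC1new, Cstep_eq hc1 hcohC1]
    have hG0' : Gmat B0 (k :: (u' ++ [j])) = G0 * Hm Bt j (-c) := by
      rw [hG0new, Gstep_eq hεc hcohC0 P1₀]
    have hG1' : Gmat B₁ (u' ++ [j]) = G1 * Hm Bt j c := by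
      rw [hG1new, Gstep_eq hc1 hcohC1 P1₁]
    have flipC := flip_identity hC1col hG1row P1₁ hB1kk hBtjj
    have hBCdual : Btᵀ * G1ᵀ = C1ᵀ * B₁ᵀ := by
      have h := congrArg Matrix.transpose P1₁
      rw [Matrix.transpose_mul, Matrix.transpose_mul] at h
      exact h.symm
    have flipGT := flip_identity (B₁ := Btᵀ) (Bt := B₁ᵀ) (k := j) (j := k) (C := G1ᵀ)
      (G := C1ᵀ) (c := c)
      (fun i => by rw [Matrix.transpose_apply]; exact hG1row i)
      (fun l => by rw [Matrix.transpose_apply]; exact hC1col l)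
      hBCdual hBtjj hB1kk
    have ht1 : ∀ e : ℤ, (Fm Btᵀ j e)ᵀ = Hm Bt j (-e) := fun e => by
      rw [Fm_transpose, Matrix.transpose_transpose]
    have ht2 : ∀ e : ℤ, (Fm B₁ᵀ k e)ᵀ = Hm B₁ k (-e) := fun e => by
      rw [Fm_transpose, Matrix.transpose_transpose]
    have e1 : ∀ e : ℤ, Hm B₁ k e * (G1 * Hm Bt j e) =
        (Fm Btᵀ j (-e) * G1ᵀ * Fm B₁ᵀ k (-e))ᵀ := by
      intro e
      rw [Matrix.transpose_mul, Matrix.transpose_mul, ht1 (-e), ht2 (-e),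
        Matrix.transpose_transpose, neg_neg]
    have flipG : Hm B₁ k c * (G1 * Hm Bt j c) = Hm B₁ k (-c) * (G1 * Hm Bt j (-c)) := by
      rw [e1 c, e1 (-c), neg_neg, flipGT]
    refine ⟨c, hc1, ?_, ?_, ?_⟩
    · rw [hC0', hC1', eqC, hδc, flipC, Matrix.mul_assoc]
    · rw [hG0', hG1', eqG, hδc, Matrix.mul_assoc]
      exact flipG.symm
    · intro l
      rw [hG1', mul_Hm]
      by_cases hlj : l = j
      · rw [if_pos hlj]
        have hsum0 : ∑ a, G1 k a * max (-(c * Bt a j)) 0 = 0 := by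
          refine Finset.sum_eq_zero fun a _ => ?_
          rw [hG1row a]
          split_ifs with h2
          · rw [h2, hBtjj, mul_zero, neg_zero, max_self, mul_zero]
          · rw [zero_mul]
        rw [hsum0, add_zero, hlj, ← hmdef, hmc]
        rcases hc1 with hc | hc <;> rw [hc] <;> norm_num
      · rw [if_neg hlj, hG1offj l hlj, mul_zero]
  · -- generic case
    push_neg at hcase
    obtain ⟨l₀, hl₀k, hl₀ne⟩ := hcase
    obtain ⟨ε0, hε0, hcoh0, -⟩ := exists_eps hsc hB0' (k :: u') j
    replace hcoh0 : ∀ i, 0 ≤ ε0 * C0 i j := hcoh0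
    have hC0l₀ : C0 l₀ j = C1 l₀ j := by rw [eqC, Fm_mul, if_neg hl₀k]
    have hee : ε0 = ε1 := by
      have h1 := hcoh0 l₀
      rw [hC0l₀] at h1
      have h2 := hcoh1 l₀
      rcases hε0 with rfl | rfl <;> rcases hε1 with rfl | rfl <;> first | rfl | omega
    have hcoh0' : ∀ i, 0 ≤ ε1 * C0 i j := by
      intro i
      have := hcoh0 i
      rw [← hee]
      exact this
    have hC0' : Cmat B0 (k :: (u' ++ [j])) = C0 * Fm Bt j ε1 := by
      rw [hC0new, Cstep_eq hε1 hcoh0']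
    have hC1' : Cmat B₁ (u' ++ [j]) = C1 * Fm Bt j ε1 := by
      rw [hC1new, Cstep_eq hε1 hcoh1]
    have hG0' : Gmat B0 (k :: (u' ++ [j])) = G0 * Hm Bt j ε1 := by
      rw [hG0new, Gstep_eq hε1 hcoh0' P1₀]
    have hG1' : Gmat B₁ (u' ++ [j]) = G1 * Hm Bt j ε1 := by
      rw [hG1new, Gstep_eq hε1 hcoh1 P1₁]
    refine ⟨δ, hδ, ?_, ?_, ?_⟩
    · rw [hC0', hC1', eqC, Matrix.mul_assoc]
    · rw [hG0', hG1', eqG, Matrix.mul_assoc]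
    · intro l
      by_cases hrowcase : ∀ l', l' ≠ j → G1 k l' = 0
      · exfalso
        have hm_ne : G1 k j ≠ 0 := by
          rcases hrowG1 with ⟨hne, -⟩ | ⟨hne, -⟩ <;>
          · intro h0
            apply hne
            funext l'
            by_cases h : l' = j
            · rw [h]; exact h0
            · exact hrowcase l' h
        have h1 : (mq G1 * Matrix.diagonal (fun i => (D i)⁻¹) * (mq C1)ᵀ) k l₀ =
            Matrix.diagonal (fun i => (D i)⁻¹) k l₀ := by rw [P2comm hD P2₁]
        rw [P2comm_entry, Finset.sum_eq_single j
          (fun b _ hb => by rw [hrowcase b hb]; push_cast; ring)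
          (fun h => absurd (Finset.mem_univ j) h),
          Matrix.diagonal_apply_ne _ (fun h : k = l₀ => hl₀k h.symm)] at h1
        have hGq : (G1 k j : ℚ) ≠ 0 := Int.cast_ne_zero.mpr hm_ne
        have hCq : (C1 l₀ j : ℚ) ≠ 0 := Int.cast_ne_zero.mpr hl₀ne
        have hDj : ((D j)⁻¹ : ℚ) ≠ 0 := inv_ne_zero (hD j).ne'
        rcases mul_eq_zero.mp h1 with h | h
        · exact hGq h
        · rcases mul_eq_zero.mp h with h | h
          · exact hDj h
          · exact hCq h
      · push_neg at hrowcase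
        obtain ⟨l₁, hl₁j, hl₁ne⟩ := hrowcase
        have hG1'l₁ : Gmat B₁ (u' ++ [j]) k l₁ = G1 k l₁ := by
          rw [hG1', mul_Hm, if_neg hl₁j]
        have hstrict : δ * Gmat B₁ (u' ++ [j]) k l₁ < 0 := by
          rw [hG1'l₁]
          have h1 := hsign l₁
          rcases hδ with rfl | rfl <;> omega
        rcases hrowG1' with ⟨-, hp⟩ | ⟨-, hp⟩
        · have hδ1 : δ = -1 := by
            rcases hδ with rfl | rfl
            · exfalso
              have h2 : 0 ≤ Gmat B₁ (u' ++ [j]) k l₁ := hp l₁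
              omega
            · rfl
          rw [hδ1]
          have h2 : 0 ≤ Gmat B₁ (u' ++ [j]) k l := hp l
          omega
        · have hδ1 : δ = 1 := by
            rcases hδ with rfl | rfl
            · rfl
            · exfalso
              have h2 : Gmat B₁ (u' ++ [j]) k l₁ ≤ 0 := hp l₁
              omega
          rw [hδ1]
          have h2 : Gmat B₁ (u' ++ [j]) k l ≤ 0 := hp l
          omega


lemma grand (hsc : SC (ι := ι)) : ∀ n : ℕ,
    (∀ w : List ι, w.length ≤ n → Mstmt w) ∧
    (∀ (k : ι) (u : List ι), u.length < n → Sstmt k u) := by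
  intro n
  induction n with
  | zero =>
    refine ⟨fun w hw => ?_, fun k u hu => absurd hu (by omega)⟩
    have hnil : w = [] := List.length_eq_zero_iff.mp (Nat.le_zero.mp hw)
    rw [hnil]
    exact Mstmt_nil
  | succ n ih =>
    obtain ⟨ihM, ihS⟩ := ih
    have Spart : ∀ (k : ι) (u : List ι), u.length < n + 1 → Sstmt k u := by
      intro k u hu
      rcases Nat.lt_or_ge u.length n with h | h
      · exact ihS k u h
      · have hlen : u.length = n := by omega
        rcases List.eq_nil_or_concat u with rfl | ⟨u', b, rfl⟩
        · exact S_base k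
        · rw [List.concat_eq_append]
          rw [List.concat_eq_append, List.length_append, List.length_singleton] at hlen
          exact S_step hsc (ihS k u' (by omega)) (ihM u' (by omega))
            (ihM (u' ++ [b]) (by rw [List.length_append, List.length_singleton]; omega))
    refine ⟨?_, Spart⟩
    intro w hw
    rcases Nat.lt_or_ge w.length (n + 1) with h | h
    · exact ihM w (by omega)
    · rcases w with _ | ⟨k, u⟩
      · exact Mstmt_nil
      · have hlu : u.length = n := by
          simp only [List.length_cons] at hw h
          omega
        exact M_step hsc (Spart k u (by omega)) (ihM u (by omega))

/-- Row sign coherence of the `G`-matrices. -/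
lemma rowSC (hsc : SC (ι := ι)) {B0 : Matrix ι ι ℤ} (hB0 : IsSkewSymmetrizable B0)
    (w : List ι) (i : ι) :
    IsPositiveVec (fun j => Gmat B0 w i j) ∨ IsNegativeVec (fun j => Gmat B0 w i j) :=
  row_coherent_of_M hsc ((grand hsc w.length).1 w le_rfl) hB0 i


/-- The `G`-cone meets each coordinate hyperplane only in its boundary. -/
theorem Gcone_inter_hyperplane_subset_frontier (n : ℕ) (hn : 1 ≤ n)
    (hsc : ∀ B : Matrix (Fin n) (Fin n) ℤ, IsSkewSymmetrizable B →
      ∀ w : List (Fin n), ColSignCoherent (Cmat B w))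
    (B0 : Matrix (Fin n) (Fin n) ℤ) (hB0 : IsSkewSymmetrizable B0)
    (w : List (Fin n)) (i : Fin n) :
    Gcone B0 w ∩ {v : Fin n → ℝ | v i = 0} ⊆ frontier (Gcone B0 w) := by
  rintro v ⟨hv, hvi⟩
  have hvi' : v i = 0 := hvi
  show v ∈ closure (Gcone B0 w) \ interior (Gcone B0 w)
  refine ⟨subset_closure hv, fun hint => ?_⟩
  have key : ∃ σ : ℝ, σ * σ = 1 ∧ |σ| = 1 ∧ ∀ j, 0 ≤ σ * (Gmat B0 w i j : ℝ) := by
    rcases rowSC hsc hB0 w i with ⟨-, hp⟩ | ⟨-, hp⟩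
    · refine ⟨1, by norm_num, abs_one, fun j => ?_⟩
      have h1 : (0 : ℤ) ≤ Gmat B0 w i j := hp j
      have h2 : (0 : ℝ) ≤ (Gmat B0 w i j : ℝ) := by exact_mod_cast h1
      linarith
    · refine ⟨-1, by norm_num, by norm_num, fun j => ?_⟩
      have h1 : Gmat B0 w i j ≤ (0 : ℤ) := hp j
      have h2 : (Gmat B0 w i j : ℝ) ≤ 0 := by exact_mod_cast h1
      linarith
  obtain ⟨σ, hσσ, hσ, hcoh⟩ := key
  have hsub : Gcone B0 w ⊆ {u : Fin n → ℝ | 0 ≤ σ * u i} := by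
    rintro u ⟨a, ha, rfl⟩
    show 0 ≤ σ * ∑ j, a j * (Gmat B0 w i j : ℝ)
    rw [Finset.mul_sum]
    refine Finset.sum_nonneg fun j _ => ?_
    have h1 := hcoh j
    have h2 := ha j
    nlinarith
  rw [mem_interior_iff_mem_nhds, Metric.mem_nhds_iff] at hint
  obtain ⟨r, hr, hball⟩ := hint
  set u : Fin n → ℝ := fun l => if l = i then v i - σ * (r / 2) else v l with hu
  have hub : u ∈ Metric.ball v r := by
    rw [Metric.mem_ball]
    have hle : dist u v ≤ r / 2 := by
      rw [dist_pi_le_iff (by linarith)]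
      intro b
      by_cases hbi : b = i
      · have hub' : u b = v i - σ * (r / 2) := by rw [hu]; simp [hbi]
        rw [hub', hbi, Real.dist_eq]
        have : v i - σ * (r / 2) - v i = -(σ * (r / 2)) := by ring
        rw [this, abs_neg, abs_mul, hσ, one_mul, abs_of_nonneg (by linarith : (0:ℝ) ≤ r / 2)]
      · have hub' : u b = v b := by rw [hu]; simp [hbi]
        rw [hub', dist_self]
        linarith
    linarith
  have hmem := hsub (hball hub)
  have hui : u i = -(σ * (r / 2)) := by
    rw [hu]
    simp [hvi']
  have hmem' : (0 : ℝ) ≤ σ * u i := hmem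
  rw [hui] at hmem'
  nlinarith


end ClusterPattern
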